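/- arXiv:2104.01253 — 3 statements merged into one kernel-verified Lean document; each statement's English description precedes it below -/
import Mathlib

section
/- Let Q be an m×k real matrix with unit-norm columns and let L be the strictly lower triangular part of Q^T Q. Then T := I - L - L^T satisfies T = 2I - Q^T Q, and consequently ‖Q^T Q - I‖ ≤ ε implies ‖T - (Q^T Q)⁻¹‖ ≤ O(ε²) whenever ε < 1; in particular if Q^T Q = I then T = (Q^T Q)⁻¹. -/
open Matrix
open scoped Matrix.Norms.L2Operator

theorem stmt_10 (m k : ℕ) (Q : Matrix (Fin m) (Fin k) ℝ)
    (hdiag : ∀ i : Fin k, (Qᵀ * Q) i i = 1)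
    (L : Matrix (Fin k) (Fin k) ℝ)
    (hL : L = Matrix.of fun i j : Fin k => if j < i then (Qᵀ * Q) i j else 0)
    (T : Matrix (Fin k) (Fin k) ℝ) (hT : T = 1 - L - Lᵀ) :
    T = (2 : ℝ) • (1 : Matrix (Fin k) (Fin k) ℝ) - Qᵀ * Q ∧
    (∀ ε : ℝ, ε < 1 → ‖Qᵀ * Q - 1‖ ≤ ε → ‖T - (Qᵀ * Q)⁻¹‖ ≤ ε ^ 2 / (1 - ε)) ∧
    (Qᵀ * Q = 1 → T = (Qᵀ * Q)⁻¹) := by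
  have hsym : ∀ i j : Fin k, (Qᵀ * Q) j i = (Qᵀ * Q) i j := by
    intro i j
    simp only [Matrix.mul_apply, Matrix.transpose_apply]
    exact Finset.sum_congr rfl fun l _ => mul_comm _ _
  have h1 : T = (2 : ℝ) • (1 : Matrix (Fin k) (Fin k) ℝ) - Qᵀ * Q := by
    subst hT hL
    ext i j
    simp only [Matrix.sub_apply, Matrix.smul_apply, Matrix.one_apply, Matrix.of_apply,
      Matrix.transpose_apply, smul_eq_mul]
    rcases lt_trichotomy i j with h | h | h
    · rw [if_neg (not_lt.2 h.le), if_pos h, if_neg h.ne, hsym]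
      ring
    · subst h
      rw [if_neg (lt_irrefl i), if_pos rfl, hdiag i]
      ring
    · rw [if_pos h, if_neg (not_lt.2 h.le), if_neg h.ne']
      ring
  refine ⟨h1, ?_, ?_⟩
  · intro ε hε1 hε
    have hε0 : 0 ≤ ε := le_trans (norm_nonneg _) hε
    rcases Nat.eq_zero_or_pos k with hk | hk
    · subst hk
      have hz : T - (Qᵀ * Q)⁻¹ = 0 := Subsingleton.elim _ _
      rw [hz, norm_zero]
      exact div_nonneg (by positivity) (by linarith)
    · haveI : Nonempty (Fin k) := ⟨⟨0, hk⟩⟩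
      set t : Matrix (Fin k) (Fin k) ℝ := 1 - Qᵀ * Q with ht
      have htn : ‖t‖ ≤ ε := by rw [ht, norm_sub_rev]; exact hε
      have ht1 : ‖t‖ < 1 := lt_of_le_of_lt htn hε1
      set S : Matrix (Fin k) (Fin k) ℝ := ∑' n : ℕ, t ^ n with hS
      have hAinv : (Qᵀ * Q)⁻¹ = S := by
        rw [Matrix.nonsing_inv_eq_ringInverse,
          show Qᵀ * Q = 1 - t from (sub_sub_cancel 1 (Qᵀ * Q)).symm,
          ← geom_series_eq_inverse t ht1]
      have hmul : (1 - t) * S = 1 := mul_neg_geom_series t ht1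
      have key : T - (Qᵀ * Q)⁻¹ = -(t * t) * S := by
        have hT2 : T = 1 + t := by
          rw [h1, ht, two_smul]; abel
        rw [hAinv, hT2]
        have h5 : (1 + t) * ((1 - t) * S) = (1 + t) := by rw [hmul, mul_one]
        calc (1 + t) - S = (1 + t) * ((1 - t) * S) - S := by rw [h5]
          _ = -(t * t) * S := by noncomm_ring
      have hSnorm : ‖S‖ ≤ (1 - ‖t‖)⁻¹ := by
        have h1n : ‖(1 : Matrix (Fin k) (Fin k) ℝ)‖ = 1 := norm_one
        have h6 := tsum_geometric_le_of_norm_lt_one t ht1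
        rw [h1n] at h6
        rw [hS]
        linarith
      have hS0 : 0 ≤ ‖S‖ := norm_nonneg _
      have ht0 : 0 ≤ ‖t‖ := norm_nonneg _
      have hbound : ‖T - (Qᵀ * Q)⁻¹‖ ≤ ‖t‖ * ‖t‖ * (1 - ‖t‖)⁻¹ := by
        calc ‖T - (Qᵀ * Q)⁻¹‖ = ‖-(t * t) * S‖ := by rw [key]
          _ ≤ ‖-(t * t)‖ * ‖S‖ := norm_mul_le _ _
          _ = ‖t * t‖ * ‖S‖ := by rw [norm_neg]
          _ ≤ (‖t‖ * ‖t‖) * ‖S‖ := mul_le_mul_of_nonneg_right (norm_mul_le _ _) hS0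
          _ ≤ ‖t‖ * ‖t‖ * (1 - ‖t‖)⁻¹ :=
              mul_le_mul_of_nonneg_left hSnorm (mul_nonneg ht0 ht0)
      refine le_trans hbound ?_
      have h2 : ‖t‖ * ‖t‖ ≤ ε * ε := mul_le_mul htn htn ht0 hε0
      have h3 : (1 - ‖t‖)⁻¹ ≤ (1 - ε)⁻¹ :=
        inv_anti₀ (by linarith) (by linarith)
      have h4 : (0:ℝ) < (1 - ε)⁻¹ := by
        apply inv_pos.2; linarith
      calc ‖t‖ * ‖t‖ * (1 - ‖t‖)⁻¹ ≤ ε * ε * (1 - ε)⁻¹ :=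
            mul_le_mul h2 h3 (inv_nonneg.2 (by linarith)) (mul_nonneg hε0 hε0)
        _ = ε ^ 2 / (1 - ε) := by rw [div_eq_mul_inv]; ring
  · intro h
    rw [h1, h, inv_one, two_smul]
    abel
end

section
/- Let Q be an m×k real matrix with orthonormal columns, w, a ∈ R^m, with C = Q^T w, β = w^T w, α = √(β - C^T C) > 0, S' = Q^T a, s = w^T a, u = w - Q C, q = u/α. Then the updated projection coefficient satisfies q^T a = (s - C^T S')/α, and the vector a - Q S' - q (q^T a) is orthogonal to every column of Q and to q. -/
open Matrix

theorem stmt_14 (m k : ℕ) (Q : Matrix (Fin m) (Fin k) ℝ) (hQ : Qᵀ * Q = 1)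
    (w a : Fin m → ℝ)
    (C : Fin k → ℝ) (hC : C = Qᵀ.mulVec w)
    (β : ℝ) (hβ : β = w ⬝ᵥ w)
    (α : ℝ) (hα : α = Real.sqrt (β - C ⬝ᵥ C)) (hαpos : 0 < α)
    (S' : Fin k → ℝ) (hS' : S' = Qᵀ.mulVec a)
    (s : ℝ) (hs : s = w ⬝ᵥ a)
    (u : Fin m → ℝ) (hu : u = w - Q.mulVec C)
    (q : Fin m → ℝ) (hq : q = α⁻¹ • u)
    (r : Fin m → ℝ) (hr : r = a - Q.mulVec S' - (q ⬝ᵥ a) • q) :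
    q ⬝ᵥ a = (s - C ⬝ᵥ S') / α ∧ Qᵀ.mulVec r = 0 ∧ q ⬝ᵥ r = 0 := by
  have hne : α ≠ 0 := ne_of_gt hαpos
  have hQu : Qᵀ.mulVec u = 0 := by
    rw [hu, Matrix.mulVec_sub, Matrix.mulVec_mulVec, hQ, Matrix.one_mulVec, hC, sub_self]
  have hQq : Qᵀ.mulVec q = 0 := by rw [hq, Matrix.mulVec_smul, hQu, smul_zero]
  have hdm : ∀ x : Fin m → ℝ, x ⬝ᵥ Q.mulVec C = (Qᵀ.mulVec x) ⬝ᵥ C := by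
    intro x
    rw [Matrix.dotProduct_mulVec, ← Matrix.mulVec_transpose]
  have hnn : 0 ≤ β - C ⬝ᵥ C := by
    by_contra h
    push_neg at h
    rw [hα, Real.sqrt_eq_zero_of_nonpos (le_of_lt h)] at hαpos
    exact lt_irrefl 0 hαpos
  have hα2 : α * α = β - C ⬝ᵥ C := by
    rw [hα, Real.mul_self_sqrt hnn]
  have huu : u ⬝ᵥ u = β - C ⬝ᵥ C := by
    rw [hu, sub_dotProduct, dotProduct_sub, dotProduct_sub,
      hdm, hdm, Matrix.mulVec_mulVec, hQ, Matrix.one_mulVec, ← hC,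
      dotProduct_comm (Q.mulVec C) w, hdm, ← hC, ← hβ]
    ring
  have hua : u ⬝ᵥ a = s - C ⬝ᵥ S' := by
    rw [hu, sub_dotProduct, ← hs, dotProduct_comm (Q.mulVec C) a, hdm, ← hS',
      dotProduct_comm]
  have hqa : q ⬝ᵥ a = (s - C ⬝ᵥ S') / α := by
    rw [hq, smul_dotProduct, hua, smul_eq_mul, div_eq_inv_mul]
  have hqq : q ⬝ᵥ q = 1 := by
    rw [hq, smul_dotProduct, dotProduct_smul, huu, ← hα2]
    simp only [smul_eq_mul]
    field_simp
  have hqQS : q ⬝ᵥ Q.mulVec S' = 0 := by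
    rw [Matrix.dotProduct_mulVec, ← Matrix.mulVec_transpose, hQq, zero_dotProduct]
  refine ⟨hqa, ?_, ?_⟩
  · rw [hr, Matrix.mulVec_sub, Matrix.mulVec_sub, Matrix.mulVec_smul, hQq, smul_zero,
      Matrix.mulVec_mulVec, hQ, Matrix.one_mulVec, ← hS', sub_self, sub_zero]
  · rw [hr, dotProduct_sub, dotProduct_sub, hqQS, dotProduct_smul,
      hqq, smul_eq_mul, mul_one, sub_zero, sub_self]
end

section
/- Let Q' be m×(j-2) with orthonormal columns, w ∈ R^m with u := w - Q'(Q'^T w) ≠ 0, α := ‖u‖, q := u/α, and let a ∈ R^m be arbitrary. Define S' = Q'^T a, C' = Q'^T w, T_last = (w^T a - C'^T S')/α², T' = S'/α. Then (1/α) a - Q' T' - T_last q = (1/α)(I - Q Q^T) a, where Q = [Q', q]. -/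
open Matrix

theorem stmt_15 (m k : ℕ) (Q' : Matrix (Fin m) (Fin k) ℝ) (hQ' : Q'ᵀ * Q' = 1)
    (w a : Fin m → ℝ)
    (C' : Fin k → ℝ) (hC' : C' = Q'ᵀ.mulVec w)
    (u : Fin m → ℝ) (hu : u = w - Q'.mulVec C') (hune : u ≠ 0)
    (α : ℝ) (hα : α = Real.sqrt (u ⬝ᵥ u))
    (q : Fin m → ℝ) (hq : q = α⁻¹ • u)
    (Q : Matrix (Fin m) (Fin k ⊕ Unit) ℝ)
    (hQdef : Q = Matrix.fromCols Q' (Matrix.of fun i (_ : Unit) => q i))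
    (S' : Fin k → ℝ) (hS' : S' = Q'ᵀ.mulVec a)
    (Tlast : ℝ) (hTlast : Tlast = (w ⬝ᵥ a - C' ⬝ᵥ S') / α ^ 2)
    (T' : Fin k → ℝ) (hT' : T' = α⁻¹ • S') :
    α⁻¹ • a - Q'.mulVec T' - Tlast • q = α⁻¹ • ((1 - Q * Qᵀ).mulVec a) := by
  have hnn : (0:ℝ) ≤ u ⬝ᵥ u :=
    Finset.sum_nonneg fun i _ => mul_self_nonneg (u i)
  have hupos : (0:ℝ) < u ⬝ᵥ u :=
    lt_of_le_of_ne hnn (Ne.symm (dotProduct_self_eq_zero.not.mpr hune))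
  have hαpos : 0 < α := by rw [hα]; exact Real.sqrt_pos.mpr hupos
  have hαne : α ≠ 0 := ne_of_gt hαpos
  have hα2 : α ^ 2 = u ⬝ᵥ u := by rw [hα, sq, Real.mul_self_sqrt hnn]
  have hua : u ⬝ᵥ a = w ⬝ᵥ a - C' ⬝ᵥ S' := by
    rw [hu, hS', sub_dotProduct]
    congr 1
    rw [dotProduct_mulVec, vecMul_transpose]
  have hqa : q ⬝ᵥ a = α⁻¹ * (u ⬝ᵥ a) := by rw [hq, smul_dotProduct, smul_eq_mul]
  have hTl : Tlast = α⁻¹ * (q ⬝ᵥ a) := by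
    rw [hTlast, ← hua, hqa]
    field_simp
  have hQQ : Q * Qᵀ = Q' * Q'ᵀ +
      (Matrix.of fun i (_ : Unit) => q i) * (Matrix.of fun i (_ : Unit) => q i)ᵀ := by
    rw [hQdef, transpose_fromCols, fromCols_mul_fromRows]
  have hcolrow : ((Matrix.of fun i (_ : Unit) => q i) *
      (Matrix.of fun i (_ : Unit) => q i)ᵀ).mulVec a = (q ⬝ᵥ a) • q := by
    funext i
    simp only [mulVec, dotProduct, mul_apply, Pi.smul_apply, smul_eq_mul,
      Matrix.of_apply, transpose_apply, Finset.univ_unique, Finset.sum_singleton,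
      Finset.sum_mul]
    exact Finset.sum_congr rfl fun j _ => by ring
  have hQS : (Q' * Q'ᵀ).mulVec a = Q'.mulVec S' := by
    rw [hS', ← mulVec_mulVec]
  rw [hQQ, sub_mulVec, one_mulVec, add_mulVec, hcolrow, hQS, hT', hTl,
    mulVec_smul]
  module
end
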